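/- Let λ ∈ ℂ with |λ| = 1 and suppose λ is not a root of unity. Consider the symbol φ(z) = λz. Then the composition operator C_φ : A(𝔻) → A(𝔻) is not uniformly mean ergodic, i.e. its Cesàro means (C_φ)_[n] do not converge in operator norm. -/

import Mathlib

open Metric Set Filter Complex
open scoped Topology Classical

noncomputable section

/-- Membership in the disc algebra `A(𝔻)`: continuous on the closed unit disc and
holomorphic on the open unit disc. -/
def IsDiscAlg (f : ℂ → ℂ) : Prop :=
  ContinuousOn f (closedBall (0:ℂ) 1) ∧ DifferentiableOn ℂ f (ball (0:ℂ) 1)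

/-- Membership in `H^∞(𝔻)`: bounded and holomorphic on the open unit disc. -/
def IsHInf (f : ℂ → ℂ) : Prop :=
  DifferentiableOn ℂ f (ball (0:ℂ) 1) ∧ ∃ M : ℝ, ∀ z ∈ ball (0:ℂ) 1, ‖f z‖ ≤ M

/-- The Cesàro means `(C_φ)_[n] f = (1/n) ∑_{m=1}^n f ∘ φ^m` of the composition
operator `C_φ f = f ∘ φ`. -/
def cesaro (φ f : ℂ → ℂ) (n : ℕ) (z : ℂ) : ℂ :=
  (n : ℂ)⁻¹ * ∑ m ∈ Finset.Icc 1 n, f (φ^[m] z)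

/-- `C_φ` is mean ergodic on `A(𝔻)`: for each `f ∈ A(𝔻)` the Cesàro means converge
in the sup norm on the closed disc. -/
def MeanErgodicDiscAlg (φ : ℂ → ℂ) : Prop :=
  ∀ f : ℂ → ℂ, IsDiscAlg f →
    ∃ g : ℂ → ℂ, TendstoUniformlyOn (cesaro φ f) g atTop (closedBall (0:ℂ) 1)

/-- `C_φ` is uniformly mean ergodic on `A(𝔻)`: the Cesàro means converge in operator
norm, i.e. uniformly over the unit ball of `A(𝔻)`. -/
def UnifMeanErgodicDiscAlg (φ : ℂ → ℂ) : Prop :=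
  ∃ P : (ℂ → ℂ) → ℂ → ℂ, ∀ ε > (0:ℝ), ∃ N : ℕ, ∀ n ≥ N,
    ∀ f : ℂ → ℂ, IsDiscAlg f → (∀ z ∈ closedBall (0:ℂ) 1, ‖f z‖ ≤ 1) →
      ∀ z ∈ closedBall (0:ℂ) 1, ‖cesaro φ f n z - P f z‖ ≤ ε

/-- `C_φ` is mean ergodic on `H^∞(𝔻)`: for each `f ∈ H^∞(𝔻)` the Cesàro means converge
in the sup norm on the open disc. -/
def MeanErgodicHInf (φ : ℂ → ℂ) : Prop :=
  ∀ f : ℂ → ℂ, IsHInf f →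
    ∃ g : ℂ → ℂ, TendstoUniformlyOn (cesaro φ f) g atTop (ball (0:ℂ) 1)

/-- `C_φ` is uniformly mean ergodic on `H^∞(𝔻)`: the Cesàro means converge in operator
norm, i.e. uniformly over the unit ball of `H^∞(𝔻)`. -/
def UnifMeanErgodicHInf (φ : ℂ → ℂ) : Prop :=
  ∃ P : (ℂ → ℂ) → ℂ → ℂ, ∀ ε > (0:ℝ), ∃ N : ℕ, ∀ n ≥ N,
    ∀ f : ℂ → ℂ, IsHInf f → (∀ z ∈ ball (0:ℂ) 1, ‖f z‖ ≤ 1) →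
      ∀ z ∈ ball (0:ℂ) 1, ‖cesaro φ f n z - P f z‖ ≤ ε

/-- `φ` is an automorphism (biholomorphic self-map) of the open unit disc. -/
def IsDiscAutomorphism (φ : ℂ → ℂ) : Prop :=
  DifferentiableOn ℂ φ (ball (0:ℂ) 1) ∧ MapsTo φ (ball (0:ℂ) 1) (ball (0:ℂ) 1) ∧
  ∃ ψ : ℂ → ℂ, DifferentiableOn ℂ ψ (ball (0:ℂ) 1) ∧
    MapsTo ψ (ball (0:ℂ) 1) (ball (0:ℂ) 1) ∧
    (∀ z ∈ ball (0:ℂ) 1, ψ (φ z) = z) ∧ ∀ z ∈ ball (0:ℂ) 1, φ (ψ z) = z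

/-- An elliptic automorphism of the disc: an automorphism with a fixed point in `𝔻`. -/
def IsEllipticAutomorphism (φ : ℂ → ℂ) : Prop :=
  IsDiscAutomorphism φ ∧ ∃ z ∈ ball (0:ℂ) 1, φ z = z

/-- A hyperbolic automorphism of the disc: an automorphism with exactly two fixed
points, both on the unit circle. -/
def IsHyperbolicAutomorphism (φ : ℂ → ℂ) : Prop :=
  IsDiscAutomorphism φ ∧ ∃ p q : ℂ, p ≠ q ∧ ‖p‖ = 1 ∧ ‖q‖ = 1 ∧ φ p = p ∧ φ q = q ∧
    ∀ z ∈ closedBall (0:ℂ) 1, φ z = z → z = p ∨ z = q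

/-- A parabolic automorphism of the disc: an automorphism with exactly one fixed
point, lying on the unit circle. -/
def IsParabolicAutomorphism (φ : ℂ → ℂ) : Prop :=
  IsDiscAutomorphism φ ∧ ∃ p : ℂ, ‖p‖ = 1 ∧ φ p = p ∧
    ∀ z ∈ closedBall (0:ℂ) 1, φ z = z → z = p

/-- A set `J ⊆ ℕ` has density one: `#(J ∩ [0,N]) / N → 1` as `N → ∞`. -/
def HasDensityOne (J : Set ℕ) : Prop :=
  Tendsto (fun N : ℕ => (((Finset.range (N + 1)).filter (fun n => n ∈ J)).card : ℝ) / N)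
    atTop (𝓝 1)

/-- A typical weight on `𝔻`: continuous, strictly positive, bounded, radial,
non-increasing in `|z|`, and tending to `0` as `|z| → 1`. -/
def IsTypicalWeight (v : ℂ → ℝ) : Prop :=
  ContinuousOn v (ball (0:ℂ) 1) ∧ (∀ z ∈ ball (0:ℂ) 1, 0 < v z) ∧
  (∃ M : ℝ, ∀ z ∈ ball (0:ℂ) 1, v z ≤ M) ∧
  (∀ z ∈ ball (0:ℂ) 1, ∀ w ∈ ball (0:ℂ) 1, ‖z‖ = ‖w‖ → v z = v w) ∧
  (∀ z ∈ ball (0:ℂ) 1, ∀ w ∈ ball (0:ℂ) 1, ‖z‖ ≤ ‖w‖ → v w ≤ v z) ∧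
  (∀ ε > (0:ℝ), ∃ r : ℝ, r < 1 ∧ ∀ z ∈ ball (0:ℂ) 1, r ≤ ‖z‖ → v z < ε)

/-- Membership in the weighted space `H_v^∞`. -/
def IsHvInf (v : ℂ → ℝ) (f : ℂ → ℂ) : Prop :=
  DifferentiableOn ℂ f (ball (0:ℂ) 1) ∧ ∃ M : ℝ, ∀ z ∈ ball (0:ℂ) 1, v z * ‖f z‖ ≤ M

/-- Membership in the weighted space `H_v^0`. -/
def IsHv0 (v : ℂ → ℝ) (f : ℂ → ℂ) : Prop :=
  IsHvInf v f ∧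
  ∀ ε > (0:ℝ), ∃ r : ℝ, r < 1 ∧ ∀ z ∈ ball (0:ℂ) 1, r ≤ ‖z‖ → v z * ‖f z‖ < ε

lemma rot_iter (lam z : ℂ) (m : ℕ) : (fun w => lam * w)^[m] z = lam ^ m * z := by
  induction m with
  | zero => simp
  | succ n ih => rw [Function.iterate_succ_apply', ih, pow_succ]; ring

lemma pow_sub_one_norm_le (a : ℂ) (ha : ‖a‖ = 1) (m : ℕ) :
    ‖a ^ m - 1‖ ≤ m * ‖a - 1‖ := by
  induction m with
  | zero => simp
  | succ n ih =>
    have h : a ^ (n + 1) - 1 = a ^ n * (a - 1) + (a ^ n - 1) := by ring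
    calc ‖a ^ (n + 1) - 1‖ ≤ ‖a ^ n * (a - 1)‖ + ‖a ^ n - 1‖ := by rw [h]; exact norm_add_le _ _
      _ = ‖a - 1‖ + ‖a ^ n - 1‖ := by rw [norm_mul, norm_pow, ha, one_pow, one_mul]
      _ ≤ ‖a - 1‖ + n * ‖a - 1‖ := by linarith
      _ = (n + 1 : ℕ) * ‖a - 1‖ := by push_cast; ring

lemma geom_Icc_mul (μ : ℂ) (n : ℕ) :
    (μ - 1) * ∑ m ∈ Finset.Icc 1 n, μ ^ m = μ ^ (n + 1) - μ := by
  induction n with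
  | zero => simp
  | succ n ih =>
    rw [Finset.sum_Icc_succ_top (by omega : 1 ≤ n + 1), mul_add, ih]
    ring

lemma geom_Icc_norm_le (μ : ℂ) (hμ : ‖μ‖ = 1) (hμ1 : μ ≠ 1) (n : ℕ) :
    ‖∑ m ∈ Finset.Icc 1 n, μ ^ m‖ ≤ 2 / ‖μ - 1‖ := by
  have hne : ‖μ - 1‖ ≠ 0 := by
    simpa [sub_eq_zero] using fun h => hμ1 h
  have h := geom_Icc_mul μ n
  have hnorm : ‖μ - 1‖ * ‖∑ m ∈ Finset.Icc 1 n, μ ^ m‖ = ‖μ ^ (n + 1) - μ‖ := by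
    rw [← norm_mul, h]
  have hle : ‖μ ^ (n + 1) - μ‖ ≤ 2 := by
    calc ‖μ ^ (n + 1) - μ‖ ≤ ‖μ ^ (n + 1)‖ + ‖μ‖ := norm_sub_le _ _
      _ = 2 := by rw [norm_pow, hμ]; norm_num
  have hpos : 0 < ‖μ - 1‖ := lt_of_le_of_ne (norm_nonneg _) (Ne.symm hne)
  rw [le_div_iff₀ hpos]
  nlinarith [hnorm, hle]

lemma exists_small_power (lam : ℂ) (hlam : ‖lam‖ = 1) {δ : ℝ} (hδ : 0 < δ) :
    ∃ k : ℕ, 0 < k ∧ ‖lam ^ k - 1‖ < δ := by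
  have hmem : ∀ n : ℕ, lam ^ n ∈ closedBall (0 : ℂ) 1 := by
    intro n
    simp [mem_closedBall, Complex.dist_eq, norm_pow, hlam]
  obtain ⟨a, -, ψ, hψ, htend⟩ :=
    tendsto_subseq_of_bounded (Metric.isBounded_closedBall (x := (0:ℂ)) (r := 1)) hmem
  have hcauchy : CauchySeq (fun n => lam ^ ψ n) := htend.cauchySeq
  obtain ⟨N, hN⟩ := Metric.cauchySeq_iff.mp hcauchy δ hδ
  have hlt : ψ N < ψ (N + 1) := hψ (Nat.lt_succ_self N)
  refine ⟨ψ (N + 1) - ψ N, by omega, ?_⟩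
  have hdist := hN (N + 1) (by omega) N le_rfl
  have hsplit : lam ^ ψ (N + 1) = lam ^ ψ N * lam ^ (ψ (N + 1) - ψ N) := by
    rw [← pow_add]
    congr 1
    omega
  have : dist (lam ^ ψ (N + 1)) (lam ^ ψ N)
      = ‖lam ^ ψ N‖ * ‖lam ^ (ψ (N + 1) - ψ N) - 1‖ := by
    rw [Complex.dist_eq, hsplit, ← norm_mul]
    congr 1
    ring
  rw [this, norm_pow, hlam, one_pow, one_mul] at hdist
  exact hdist

/-- **Rotation symbol, irrational case: no uniform mean ergodicity on `A(𝔻)`.** If `|λ| = 1`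
and `λ` is not a root of unity, then for `φ(z) = λz` the composition operator
`C_φ : A(𝔻) → A(𝔻)` is not uniformly mean ergodic. -/
theorem stmt_2 (lam : ℂ) (hlam : ‖lam‖ = 1) (hnotroot : ∀ j : ℕ, 0 < j → lam ^ j ≠ 1) :
    ¬ UnifMeanErgodicDiscAlg (fun w => lam * w) := by
  rintro ⟨P, hP⟩
  obtain ⟨N, hN⟩ := hP (1/8) (by norm_num)
  set n1 : ℕ := N + 1 with hn1
  have hn1pos : (0:ℝ) < (n1:ℝ) := by positivity
  have hn1ne : (n1:ℝ) ≠ 0 := ne_of_gt hn1pos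
  have hδpos : (0:ℝ) < (16 * (n1:ℝ))⁻¹ := by positivity
  obtain ⟨k, hk0, hkδ⟩ := exists_small_power lam hlam hδpos
  set μ : ℂ := lam ^ k with hμdef
  have hμnorm : ‖μ‖ = 1 := by rw [hμdef, norm_pow, hlam, one_pow]
  have hμ1 : μ ≠ 1 := hnotroot k hk0
  have hμsub : 0 < ‖μ - 1‖ := by
    rw [norm_pos_iff, sub_ne_zero]; exact hμ1
  set f : ℂ → ℂ := fun z => z ^ k with hf
  have halg : IsDiscAlg f :=
    ⟨(continuous_pow k).continuousOn, (differentiable_pow k).differentiableOn⟩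
  have hbd : ∀ z ∈ closedBall (0:ℂ) 1, ‖f z‖ ≤ 1 := by
    intro z hz
    have hz1 : ‖z‖ ≤ 1 := by simpa [Complex.dist_eq] using mem_closedBall.mp hz
    simp only [hf, norm_pow]
    exact pow_le_one₀ (norm_nonneg z) hz1
  have h1mem : (1:ℂ) ∈ closedBall (0:ℂ) 1 := by simp
  -- value of the Cesàro mean at z = 1
  have hces : ∀ n : ℕ, cesaro (fun w => lam * w) f n 1
      = (n:ℂ)⁻¹ * ∑ m ∈ Finset.Icc 1 n, μ ^ m := by
    intro n
    unfold cesaro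
    congr 1
    refine Finset.sum_congr rfl fun m _ => ?_
    rw [rot_iter, mul_one]
    simp only [hf, hμdef]
    rw [← pow_mul, ← pow_mul, mul_comm m k]
  -- the Cesàro means at 1 tend to 0, so ‖P f 1‖ ≤ 1/4
  have hcesbd : ∀ n : ℕ, ‖cesaro (fun w => lam * w) f n 1‖ ≤ (n:ℝ)⁻¹ * (2 / ‖μ - 1‖) := by
    intro n
    rw [hces, norm_mul, norm_inv, Complex.norm_natCast]
    exact mul_le_mul_of_nonneg_left (geom_Icc_norm_le μ hμnorm hμ1 n) (by positivity)
  obtain ⟨n0, hn0⟩ := exists_nat_ge (16 / ‖μ - 1‖)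
  set n2 : ℕ := max n1 (n0 + 1) with hn2
  have hn2N : N ≤ n2 := le_trans (by omega) (le_max_left _ _)
  have hn2pos : (0:ℝ) < (n2:ℝ) := by positivity
  have hn0n2 : n0 ≤ n2 := le_trans (Nat.le_succ n0) (le_max_right n1 (n0+1))
  have hn2big : 16 / ‖μ - 1‖ ≤ (n2:ℝ) := hn0.trans (by exact_mod_cast hn0n2)
  have h16 : (16:ℝ) ≤ (n2:ℝ) * ‖μ - 1‖ := (div_le_iff₀ hμsub).mp hn2big
  have hsmall : (n2:ℝ)⁻¹ * (2 / ‖μ - 1‖) ≤ 1/8 := by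
    have heq : (n2:ℝ)⁻¹ * (2 / ‖μ - 1‖) = 2 / ((n2:ℝ) * ‖μ - 1‖) := by
      rw [div_eq_mul_inv, div_eq_mul_inv, mul_inv]; ring
    rw [heq]
    calc 2 / ((n2:ℝ) * ‖μ - 1‖) ≤ 2 / 16 := by gcongr
      _ = 1/8 := by norm_num
  have hA2 := hN n2 hn2N f halg hbd 1 h1mem
  have hPsmall : ‖P f 1‖ ≤ 1/4 := by
    have h1 : ‖P f 1‖ ≤ ‖cesaro (fun w => lam * w) f n2 1 - P f 1‖
        + ‖cesaro (fun w => lam * w) f n2 1‖ := by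
      have h := norm_sub_le (cesaro (fun w => lam * w) f n2 1 - P f 1)
        (cesaro (fun w => lam * w) f n2 1)
      have he : cesaro (fun w => lam * w) f n2 1 - P f 1 - cesaro (fun w => lam * w) f n2 1
          = -(P f 1) := by ring
      rw [he, norm_neg] at h
      exact h
    have h2 := le_trans (hcesbd n2) hsmall
    linarith
  -- at n = n1, the Cesàro mean is within 1/16 of 1
  have hterm : ∀ m ∈ Finset.Icc 1 n1, ‖μ ^ m - 1‖ ≤ (16:ℝ)⁻¹ := by
    intro m hm
    have hm' : m ≤ n1 := (Finset.mem_Icc.mp hm).2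
    calc ‖μ ^ m - 1‖ ≤ m * ‖μ - 1‖ := pow_sub_one_norm_le μ hμnorm m
      _ ≤ (n1:ℝ) * (16 * (n1:ℝ))⁻¹ :=
          mul_le_mul (by exact_mod_cast hm') (le_of_lt hkδ) (norm_nonneg _) (by positivity)
      _ = (16:ℝ)⁻¹ := by field_simp
  have hc1 : ‖cesaro (fun w => lam * w) f n1 1 - 1‖ ≤ 1/16 := by
    rw [hces n1]
    have hrw : (n1:ℂ)⁻¹ * ∑ m ∈ Finset.Icc 1 n1, μ ^ m - 1
        = (n1:ℂ)⁻¹ * ∑ m ∈ Finset.Icc 1 n1, (μ ^ m - 1) := by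
      rw [Finset.sum_sub_distrib, mul_sub]
      congr 1
      rw [Finset.sum_const, Nat.card_Icc]
      simp only [Nat.add_sub_cancel, nsmul_eq_mul, mul_one]
      rw [inv_mul_cancel₀ (by exact_mod_cast hn1ne)]
    rw [hrw, norm_mul, norm_inv, Complex.norm_natCast]
    have hsumbd : ‖∑ m ∈ Finset.Icc 1 n1, (μ ^ m - 1)‖ ≤ (n1:ℝ) * (16:ℝ)⁻¹ := by
      calc ‖∑ m ∈ Finset.Icc 1 n1, (μ ^ m - 1)‖
          ≤ ∑ m ∈ Finset.Icc 1 n1, ‖μ ^ m - 1‖ := norm_sum_le _ _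
        _ ≤ ∑ _m ∈ Finset.Icc 1 n1, (16:ℝ)⁻¹ := Finset.sum_le_sum hterm
        _ = (n1:ℝ) * (16:ℝ)⁻¹ := by
            rw [Finset.sum_const, Nat.card_Icc]
            simp [nsmul_eq_mul]
    calc (n1:ℝ)⁻¹ * ‖∑ m ∈ Finset.Icc 1 n1, (μ ^ m - 1)‖
        ≤ (n1:ℝ)⁻¹ * ((n1:ℝ) * (16:ℝ)⁻¹) :=
          mul_le_mul_of_nonneg_left hsumbd (by positivity)
      _ = 1/16 := by field_simp
  have hA1 := hN n1 (by omega) f halg hbd 1 h1mem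
  -- contradiction
  have habs : ∀ c p : ℂ, (1:ℝ) ≤ ‖c - 1‖ + ‖c - p‖ + ‖p‖ := by
    intro c p
    calc (1:ℝ) = ‖(1 - c) + (c - p) + p‖ := by
          rw [show (1 - c) + (c - p) + p = (1:ℂ) by ring, norm_one]
      _ ≤ ‖1 - c‖ + ‖c - p‖ + ‖p‖ := norm_add₃_le
      _ = ‖c - 1‖ + ‖c - p‖ + ‖p‖ := by rw [norm_sub_rev]
  have key := habs (cesaro (fun w => lam * w) f n1 1) (P f 1)
  linarith
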